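/- Let B be the subalgebra of F⟨x,y⟩ spanned by balanced monomials (imbalance 0). If f ∈ B is nonzero and f = g·h is a factorization in F⟨x,y⟩ with g, h nonzero, then there exists an integer a such that every monomial in the support of g has imbalance a and every monomial in the support of h has imbalance −a. -/

import Mathlib

/-- The imbalance of a word over `{x,y}` (with `x = true`, `y = false`):
number of `x`'s minus number of `y`'s. -/
def imbL (m : List Bool) : ℤ := (m.count true : ℤ) - (m.count false : ℤ)

/-- A nonempty word over `{x,y}` is minimally balanced if its imbalance is `0`
and every nonempty proper prefix has strictly positive imbalance. -/
def MinBal (m : List Bool) : Prop :=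
  m ≠ [] ∧ imbL m = 0 ∧ ∀ p : List Bool, p <+: m → p ≠ [] → p ≠ m → 0 < imbL p
noncomputable section
open Classical

def dwt (m : FreeMonoid Bool) : ℤ := imbL (FreeMonoid.toList m)

lemma dwt_mul (m n : FreeMonoid Bool) : dwt (m * n) = dwt m + dwt n := by
  simp [dwt, imbL, FreeMonoid.toList_mul, List.count_append]
  ring

lemma top_component_apply {F : Type*} [Field F] (D : FreeMonoid Bool → ℤ)
    (hD : ∀ m n, D (m * n) = D m + D n)
    (g h : MonoidAlgebra F (FreeMonoid Bool)) (A B : ℤ)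
    (hA : ∀ m ∈ g.coeff.support, D m ≤ A) (hB : ∀ n ∈ h.coeff.support, D n ≤ B)
    (w : FreeMonoid Bool) (hw : D w = A + B)
    (gA hB' : MonoidAlgebra F (FreeMonoid Bool))
    (hgAdef : gA = MonoidAlgebra.ofCoeff (g.coeff.filter fun m => D m = A))
    (hhBdef : hB' = MonoidAlgebra.ofCoeff (h.coeff.filter fun n => D n = B)) :
    (g * h).coeff w = (gA * hB').coeff w := by
  rw [MonoidAlgebra.mul_apply, MonoidAlgebra.mul_apply]
  simp only [Finsupp.sum, hgAdef, hhBdef, MonoidAlgebra.coeff_ofCoeff, Finsupp.support_filter]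
  rw [Finset.sum_filter]
  refine Finset.sum_congr rfl fun m hm => ?_
  rw [Finset.sum_filter]
  by_cases hmA : D m = A
  · simp only [hmA, if_true]
    refine Finset.sum_congr rfl fun n hn => ?_
    by_cases hnB : D n = B
    · simp [Finsupp.filter_apply, hmA, hnB]
    · simp only [hnB, if_false]
      by_cases hmn : m * n = w
      · exact absurd (by rw [← hmn, hD, hmA] at hw; linarith) hnB
      · simp [hmn]
  · simp only [hmA, if_false]
    refine Finset.sum_eq_zero fun n hn => ?_
    by_cases hmn : m * n = w
    · have h1 : D m ≤ A := hA m hm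
      have h2 : D n ≤ B := hB n hn
      have : D m + D n = A + B := by rw [← hD, hmn, hw]
      exact absurd (by linarith) hmA
    · simp [hmn]

lemma exists_weight_of_apply_ne_zero {F : Type*} [Field F]
    (g h : MonoidAlgebra F (FreeMonoid Bool)) (w : FreeMonoid Bool)
    (hne : (g * h).coeff w ≠ 0) :
    ∃ m ∈ g.coeff.support, ∃ n ∈ h.coeff.support, m * n = w := by
  rw [MonoidAlgebra.mul_apply] at hne
  obtain ⟨m, hm, hm2⟩ := Finset.exists_ne_zero_of_sum_ne_zero hne
  obtain ⟨n, hn, hn2⟩ := Finset.exists_ne_zero_of_sum_ne_zero hm2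
  refine ⟨m, hm, n, hn, ?_⟩
  by_contra hc
  simp [hc] at hn2

lemma sum_eq_zero_step {F : Type*} [Field F] (D : FreeMonoid Bool → ℤ)
    (hD : ∀ m n, D (m * n) = D m + D n)
    (f g h : MonoidAlgebra F (FreeMonoid Bool))
    (hfB : ∀ m ∈ f.coeff.support, D m = 0)
    (hfgh : f = g * h)
    (A B : ℤ)
    (hA : ∀ m ∈ g.coeff.support, D m ≤ A) (hB : ∀ n ∈ h.coeff.support, D n ≤ B)
    (hAex : ∃ m ∈ g.coeff.support, D m = A) (hBex : ∃ n ∈ h.coeff.support, D n = B) :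
    A + B = 0 := by
  set gA : MonoidAlgebra F (FreeMonoid Bool) := MonoidAlgebra.ofCoeff (g.coeff.filter fun m => D m = A) with hgA
  set hB' : MonoidAlgebra F (FreeMonoid Bool) := MonoidAlgebra.ofCoeff (h.coeff.filter fun n => D n = B) with hhB
  have hgA0 : gA ≠ 0 := by
    obtain ⟨m, hm, hmd⟩ := hAex
    intro hc
    have h1 : gA.coeff m = g.coeff m := by simp [hgA, MonoidAlgebra.coeff_ofCoeff, Finsupp.filter_apply, hmd]
    rw [hc] at h1
    exact (Finsupp.mem_support_iff.mp hm) (by simpa using h1.symm)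
  have hhB0 : hB' ≠ 0 := by
    obtain ⟨n, hn, hnd⟩ := hBex
    intro hc
    have h1 : hB'.coeff n = h.coeff n := by simp [hhB, MonoidAlgebra.coeff_ofCoeff, Finsupp.filter_apply, hnd]
    rw [hc] at h1
    exact (Finsupp.mem_support_iff.mp hn) (by simpa using h1.symm)
  have hprod : gA * hB' ≠ 0 := mul_ne_zero hgA0 hhB0
  obtain ⟨w, hw⟩ := Finsupp.ne_iff.mp (fun hc => hprod (MonoidAlgebra.coeff_eq_zero.mp hc))
  simp only [Finsupp.coe_zero, Pi.zero_apply] at hw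
  obtain ⟨m, hm, n, hn, hmn⟩ := exists_weight_of_apply_ne_zero gA hB' w hw
  have hmd : D m = A := by
    have h1 : m ∈ g.coeff.support.filter fun m => D m = A := by
      rw [← Finsupp.support_filter]; exact hm
    exact (Finset.mem_filter.mp h1).2
  have hnd : D n = B := by
    have h1 : n ∈ h.coeff.support.filter fun n => D n = B := by
      rw [← Finsupp.support_filter]; exact hn
    exact (Finset.mem_filter.mp h1).2
  have hwd : D w = A + B := by rw [← hmn, hD, hmd, hnd]
  have hfw : f.coeff w ≠ 0 := by
    rw [hfgh, top_component_apply D hD g h A B hA hB w hwd gA hB' hgA hhB]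
    exact hw
  have h0 : D w = 0 := hfB w (Finsupp.mem_support_iff.mpr hfw)
  rw [hwd] at h0
  exact h0



/-- The degree of a noncommutative polynomial in the free algebra
`F⟨X⟩ = MonoidAlgebra F (FreeMonoid X)`. -/
def ncDeg {F : Type*} [Field F] {X : Type*} (f : MonoidAlgebra F (FreeMonoid X)) : ℕ :=
  f.coeff.support.sup fun m => m.length

/-- The algebra homomorphism `F⟨X⟩ → F⟨x,y⟩` determined by its values `v i`
on the variables, extended multiplicatively to monomials and linearly. -/
def phiGen {F : Type*} [Field F] {X : Type*}
    (v : X → MonoidAlgebra F (FreeMonoid Bool)) :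
    MonoidAlgebra F (FreeMonoid X) →ₐ[F] MonoidAlgebra F (FreeMonoid Bool) :=
  MonoidAlgebra.lift F _ (FreeMonoid X) (FreeMonoid.lift v)

/-- Let `B` be the subalgebra of `F⟨x,y⟩` spanned by balanced monomials
(imbalance `0`), membership in which is expressed by every monomial of the
support being balanced. If `f ∈ B` is nonzero and `f = g·h` with `g, h` nonzero,
then there is an integer `a` such that every monomial of `g` has imbalance `a`
and every monomial of `h` has imbalance `-a`. -/
theorem factor_imbalance_constant (F : Type*) [Field F]
    (f g h : MonoidAlgebra F (FreeMonoid Bool))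
    (hfB : ∀ m ∈ f.coeff.support, imbL (FreeMonoid.toList m) = 0)
    (hf : f ≠ 0) (hg : g ≠ 0) (hh : h ≠ 0) (hfgh : f = g * h) :
    ∃ a : ℤ, (∀ m ∈ g.coeff.support, imbL (FreeMonoid.toList m) = a) ∧
      (∀ m ∈ h.coeff.support, imbL (FreeMonoid.toList m) = -a) := by
  have hfB' : ∀ m ∈ f.coeff.support, dwt m = 0 := hfB
  have hgs : (g.coeff.support.image dwt).Nonempty :=
    (Finsupp.support_nonempty_iff.mpr (fun hc => hg (MonoidAlgebra.coeff_eq_zero.mp hc))).image _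
  have hhs : (h.coeff.support.image dwt).Nonempty :=
    (Finsupp.support_nonempty_iff.mpr (fun hc => hh (MonoidAlgebra.coeff_eq_zero.mp hc))).image _
  set A := (g.coeff.support.image dwt).max' hgs with hA
  set B := (h.coeff.support.image dwt).max' hhs with hB
  set a := (g.coeff.support.image dwt).min' hgs with ha
  set b := (h.coeff.support.image dwt).min' hhs with hb
  have hAle : ∀ m ∈ g.coeff.support, dwt m ≤ A :=
    fun m hm => Finset.le_max' _ _ (Finset.mem_image_of_mem _ hm)
  have hBle : ∀ n ∈ h.coeff.support, dwt n ≤ B :=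
    fun n hn => Finset.le_max' _ _ (Finset.mem_image_of_mem _ hn)
  have hage : ∀ m ∈ g.coeff.support, a ≤ dwt m :=
    fun m hm => Finset.min'_le _ _ (Finset.mem_image_of_mem _ hm)
  have hbge : ∀ n ∈ h.coeff.support, b ≤ dwt n :=
    fun n hn => Finset.min'_le _ _ (Finset.mem_image_of_mem _ hn)
  have hAmem : ∃ m ∈ g.coeff.support, dwt m = A := by
    obtain ⟨m, hm, hmd⟩ := Finset.mem_image.mp ((g.coeff.support.image dwt).max'_mem hgs)
    exact ⟨m, hm, hmd⟩
  have hBmem : ∃ n ∈ h.coeff.support, dwt n = B := by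
    obtain ⟨n, hn, hnd⟩ := Finset.mem_image.mp ((h.coeff.support.image dwt).max'_mem hhs)
    exact ⟨n, hn, hnd⟩
  have hamem : ∃ m ∈ g.coeff.support, dwt m = a := by
    obtain ⟨m, hm, hmd⟩ := Finset.mem_image.mp ((g.coeff.support.image dwt).min'_mem hgs)
    exact ⟨m, hm, hmd⟩
  have hbmem : ∃ n ∈ h.coeff.support, dwt n = b := by
    obtain ⟨n, hn, hnd⟩ := Finset.mem_image.mp ((h.coeff.support.image dwt).min'_mem hhs)
    exact ⟨n, hn, hnd⟩
  have hABsum : A + B = 0 :=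
    sum_eq_zero_step dwt dwt_mul f g h hfB' hfgh A B hAle hBle hAmem hBmem
  have habsum : (-a) + (-b) = 0 := by
    refine sum_eq_zero_step (fun m => -(dwt m)) (fun m n => by simp only [dwt_mul]; ring)
      f g h (fun m hm => by simp only [hfB' m hm]; ring) hfgh (-a) (-b)
      (fun m hm => neg_le_neg (hage m hm)) (fun n hn => neg_le_neg (hbge n hn))
      ?_ ?_
    · obtain ⟨m, hm, hmd⟩ := hamem; exact ⟨m, hm, by show -(dwt m) = -a; rw [hmd]⟩
    · obtain ⟨n, hn, hnd⟩ := hbmem; exact ⟨n, hn, by show -(dwt n) = -b; rw [hnd]⟩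
  have haleA : a ≤ A := by
    obtain ⟨m, hm, hmd⟩ := hAmem; have := hage m hm; omega
  have hbleB : b ≤ B := by
    obtain ⟨n, hn, hnd⟩ := hBmem; have := hbge n hn; omega
  have haA : a = A := by omega
  have hbB : b = B := by omega
  refine ⟨A, fun m hm => ?_, fun n hn => ?_⟩
  · have h1 := hAle m hm
    have h2 := hage m hm
    show dwt m = A
    omega
  · have h1 := hBle n hn
    have h2 := hbge n hn
    show dwt n = -A
    omega
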